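/- If G is a connected subcubic graph of order n ≥ 6 with n ≡ 2 (mod 4), then C(G) ≤ 7/12 + 14/(12n). -/

import Mathlib

namespace ClusterCoeff

/-- The degree of a vertex. -/
noncomputable def deg {V : Type*} (G : SimpleGraph V) (u : V) : ℕ :=
  Nat.card (G.neighborSet u)

/-- The number of edges of the subgraph induced by the neighborhood of `u`. -/
noncomputable def nbrE {V : Type*} (G : SimpleGraph V) (u : V) : ℕ :=
  Nat.card {p : G.neighborSet u × G.neighborSet u // G.Adj p.1 p.2} / 2

/-- The clustering coefficient of the vertex `u`. -/
noncomputable def localCC {V : Type*} (G : SimpleGraph V) (u : V) : ℝ :=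
  if 2 ≤ deg G u then (nbrE G u : ℝ) / ((deg G u).choose 2) else 0

/-- The clustering coefficient of the graph `G`. -/
noncomputable def cc {V : Type*} [Fintype V] (G : SimpleGraph V) : ℝ :=
  (∑ u, localCC G u) / (Fintype.card V)

/-- The complete graph on `n` vertices minus the edge between vertices `0` and `1`. -/
def Kminus (n : ℕ) [NeZero n] : SimpleGraph (Fin n) where
  Adj a b := a ≠ b ∧ ¬((a = 0 ∧ b = 1) ∨ (a = 1 ∧ b = 0))
  symm := by
    constructor
    intro a b h
    obtain ⟨h1, h2⟩ := h
    exact ⟨h1.symm, by tauto⟩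
  loopless := by
    constructor
    intro a h
    exact h.1 rfl

/-- The graph obtained from `G` by adding the edge `uv`. -/
def addEdge {V : Type*} (G : SimpleGraph V) (u v : V) : SimpleGraph V where
  Adj a b := a ≠ b ∧ (G.Adj a b ∨ (a = u ∧ b = v) ∨ (a = v ∧ b = u))
  symm := by
    constructor
    intro a b h
    obtain ⟨h1, h2⟩ := h
    refine ⟨h1.symm, ?_⟩
    rcases h2 with h | h | h
    · exact Or.inl h.symm
    · exact Or.inr (Or.inr ⟨h.2, h.1⟩)
    · exact Or.inr (Or.inl ⟨h.2, h.1⟩)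
  loopless := by
    constructor
    intro a h
    exact h.1 rfl

/-- The graph obtained from `G` by deleting the edge `uv`. -/
def delEdge {V : Type*} (G : SimpleGraph V) (u v : V) : SimpleGraph V where
  Adj a b := G.Adj a b ∧ ¬((a = u ∧ b = v) ∨ (a = v ∧ b = u))
  symm := by
    constructor
    intro a b h
    exact ⟨h.1.symm, by tauto⟩
  loopless := by
    constructor
    intro a h
    exact G.loopless.irrefl a h.1

/-- The modified connected caveman graph `G(k,ℓ)`: `ℓ` copies of `K_{k+1} - e` arranged
cyclically, with one edge between consecutive copies, chosen so that the graph is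
`k`-regular (the two degree-deficient vertices `0` and `1` of each copy receive
the connecting edges). -/
def cave (k ℓ : ℕ) : SimpleGraph (ZMod ℓ × Fin (k + 1)) where
  Adj v w := v ≠ w ∧
    ((v.1 = w.1 ∧ v.2 ≠ w.2 ∧ ¬((v.2 = 0 ∧ w.2 = 1) ∨ (v.2 = 1 ∧ w.2 = 0))) ∨
     (w.1 = v.1 + 1 ∧ v.2 = 0 ∧ w.2 = 1) ∨
     (v.1 = w.1 + 1 ∧ w.2 = 0 ∧ v.2 = 1))
  symm := by
    constructor
    intro v w h
    obtain ⟨h0, h⟩ := h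
    refine ⟨h0.symm, ?_⟩
    rcases h with ⟨h1, h2, h3⟩ | ⟨h1, h2, h3⟩ | ⟨h1, h2, h3⟩
    · exact Or.inl ⟨h1.symm, h2.symm, by tauto⟩
    · exact Or.inr (Or.inr ⟨h1, h2, h3⟩)
    · exact Or.inr (Or.inl ⟨h1, h2, h3⟩)
  loopless := by
    constructor
    intro v h
    exact h.1 rfl

set_option linter.unusedSectionVars false
set_option maxHeartbeats 2000000
open Finset

section Helpers
variable {V : Type*} [Fintype V] [DecidableEq V] {G : SimpleGraph V} [DecidableRel G.Adj]

lemma deg_eq (u : V) : deg G u = G.degree u := by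
  rw [deg, ← SimpleGraph.card_neighborSet_eq_degree, Nat.card_eq_fintype_card]

def E2 (G : SimpleGraph V) [DecidableRel G.Adj] (u : V) : Finset (V × V) :=
  (G.neighborFinset u ×ˢ G.neighborFinset u).filter fun p => G.Adj p.1 p.2

lemma nbrE_eq (u : V) : nbrE G u = (E2 G u).card / 2 := by
  have : Nat.card {p : G.neighborSet u × G.neighborSet u // G.Adj p.1 p.2}
      = (E2 G u).card := by
    rw [Nat.card_eq_fintype_card, ← Fintype.card_coe]
    apply Fintype.card_congr
    refine ⟨fun x => ⟨(x.1.1.1, x.1.2.1), ?_⟩, fun q => ⟨(⟨q.1.1, ?_⟩, ⟨q.1.2, ?_⟩), ?_⟩, ?_, ?_⟩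
    · simp only [E2, mem_filter, mem_product, SimpleGraph.mem_neighborFinset]
      exact ⟨⟨x.1.1.2, x.1.2.2⟩, x.2⟩
    · have := q.2; simp only [E2, mem_filter, mem_product,
        SimpleGraph.mem_neighborFinset] at this; exact this.1.1
    · have := q.2; simp only [E2, mem_filter, mem_product,
        SimpleGraph.mem_neighborFinset] at this; exact this.1.2
    · have := q.2; simp only [E2, mem_filter, mem_product,
        SimpleGraph.mem_neighborFinset] at this; exact this.2
    · intro x; rfl
    · intro q; rfl
  rw [nbrE, this]

lemma E2_card (u : V) : (E2 G u).card =
    ∑ a ∈ G.neighborFinset u, ∑ b ∈ G.neighborFinset u, if G.Adj a b then 1 else 0 := by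
  rw [E2, card_filter, Finset.sum_product]

lemma mem_of_adj_three {u a b c d : V} (hdeg : G.degree u ≤ 3)
    (ha : G.Adj u a) (hb : G.Adj u b) (hc : G.Adj u c)
    (hab : a ≠ b) (hac : a ≠ c) (hbc : b ≠ c) (hd : G.Adj u d) :
    d = a ∨ d = b ∨ d = c := by
  by_contra h
  push_neg at h
  have hsub : ({d, a, b, c} : Finset V) ⊆ G.neighborFinset u := by
    intro x hx
    simp only [mem_insert, mem_singleton] at hx
    rcases hx with rfl | rfl | rfl | rfl <;> simp [hd, ha, hb, hc]
  have : ({d, a, b, c} : Finset V).card = 4 := by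
    rw [card_insert_of_notMem (by simp [h.1, h.2.1, h.2.2]),
      card_insert_of_notMem (by simp [hab, hac]),
      card_insert_of_notMem (by simp [hbc]), card_singleton]
  have h4 := Finset.card_le_card hsub
  have : (G.neighborFinset u).card ≤ 3 := hdeg
  omega

lemma nf_eq_three {u a b c : V} (hdeg : G.degree u ≤ 3)
    (ha : G.Adj u a) (hb : G.Adj u b) (hc : G.Adj u c)
    (hab : a ≠ b) (hac : a ≠ c) (hbc : b ≠ c) :
    G.neighborFinset u = {a, b, c} := by
  apply Finset.Subset.antisymm
  · intro x hx
    rw [SimpleGraph.mem_neighborFinset] at hx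
    have := mem_of_adj_three hdeg ha hb hc hab hac hbc hx
    simp only [mem_insert, mem_singleton]; tauto
  · intro x hx
    simp only [mem_insert, mem_singleton] at hx
    rcases hx with rfl | rfl | rfl <;>
      simp [SimpleGraph.mem_neighborFinset, ha, hb, hc]

lemma nf_eq_two {u a b : V} (hdeg : G.degree u ≤ 2)
    (ha : G.Adj u a) (hb : G.Adj u b) (hab : a ≠ b) :
    G.neighborFinset u = {a, b} := by
  symm
  apply Finset.eq_of_subset_of_card_le
  · intro x hx
    simp only [mem_insert, mem_singleton] at hx
    rcases hx with rfl | rfl <;> simp [SimpleGraph.mem_neighborFinset, ha, hb]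
  · rw [card_pair hab]; exact hdeg

lemma localCC_of_no_tri {u : V} (h : ∀ v w, G.Adj u v → G.Adj u w → ¬ G.Adj v w) :
    localCC G u = 0 := by
  have he : E2 G u = ∅ := by
    rw [E2, Finset.filter_eq_empty_iff]
    rintro ⟨a, b⟩ hab
    rw [mem_product, SimpleGraph.mem_neighborFinset, SimpleGraph.mem_neighborFinset] at hab
    exact h a b hab.1 hab.2
  have : nbrE G u = 0 := by rw [nbrE_eq, he]; simp
  rw [localCC, this]
  split <;> simp

lemma localCC_deg2_tri {u v w : V} (h2 : G.degree u = 2)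
    (hv : G.Adj u v) (hw : G.Adj u w) (hvw : G.Adj v w) :
    localCC G u = 1 := by
  have hne : v ≠ w := hvw.ne
  have hnf : G.neighborFinset u = {v, w} := nf_eq_two h2.le hv hw hne
  have hcard : (E2 G u).card = 2 := by
    have p1 : G.Adj w v := hvw.symm
    rw [E2_card, hnf]
    simp [Finset.sum_pair hne, hvw, p1, G.irrefl]
  have hn : nbrE G u = 1 := by rw [nbrE_eq, hcard]
  rw [localCC, hn, deg_eq, h2]
  norm_num

lemma localCC_deg3 {u : V} (h3 : G.degree u = 3) :
    localCC G u = (nbrE G u : ℝ) / 3 := by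
  rw [localCC, deg_eq, h3]
  norm_num

lemma nbrE_deg3_one {u v w x : V} (h3 : G.degree u = 3)
    (hv : G.Adj u v) (hw : G.Adj u w) (hx : G.Adj u x)
    (hvw : v ≠ w) (hvx : v ≠ x) (hwx : w ≠ x)
    (avw : G.Adj v w) (avx : ¬ G.Adj v x) (awx : ¬ G.Adj w x) :
    nbrE G u = 1 := by
  have hnf := nf_eq_three h3.le hv hw hx hvw hvx hwx
  have hcard : (E2 G u).card = 2 := by
    have p1 : G.Adj w v := avw.symm
    have n1 : ¬ G.Adj x v := fun h => avx h.symm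
    have n2 : ¬ G.Adj x w := fun h => awx h.symm
    have m1 : v ∉ ({w, x} : Finset V) := by
      simp only [mem_insert, mem_singleton]; push_neg; exact ⟨hvw, hvx⟩
    have m2 : w ∉ ({x} : Finset V) := by simp only [mem_singleton]; exact hwx
    rw [E2_card, hnf]
    simp only [Finset.sum_insert m1, Finset.sum_insert m2, Finset.sum_singleton]
    simp [avw, p1, avx, awx, n1, n2, G.irrefl]
  rw [nbrE_eq, hcard]

lemma nbrE_deg3_two {u v w x : V} (h3 : G.degree u = 3)
    (hv : G.Adj u v) (hw : G.Adj u w) (hx : G.Adj u x)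
    (hvw : v ≠ w) (hvx : v ≠ x) (hwx : w ≠ x)
    (avw : G.Adj v w) (avx : G.Adj v x) (awx : ¬ G.Adj w x) :
    nbrE G u = 2 := by
  have hnf := nf_eq_three h3.le hv hw hx hvw hvx hwx
  have hcard : (E2 G u).card = 4 := by
    have p1 : G.Adj w v := avw.symm
    have p2 : G.Adj x v := avx.symm
    have n2 : ¬ G.Adj x w := fun h => awx h.symm
    have m1 : v ∉ ({w, x} : Finset V) := by
      simp only [mem_insert, mem_singleton]; push_neg; exact ⟨hvw, hvx⟩
    have m2 : w ∉ ({x} : Finset V) := by simp only [mem_singleton]; exact hwx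
    rw [E2_card, hnf]
    simp only [Finset.sum_insert m1, Finset.sum_insert m2, Finset.sum_singleton]
    simp [avw, p1, avx, p2, awx, n2, G.irrefl]
  rw [nbrE_eq, hcard]

/-- Diamond: tips p,q; centers a,b. -/
def Dia (G : SimpleGraph V) (p q a b : V) : Prop :=
  G.Adj a b ∧ G.Adj p a ∧ G.Adj p b ∧ G.Adj q a ∧ G.Adj q b ∧ p ≠ q ∧ ¬ G.Adj p q

def R (G : SimpleGraph V) (u v : V) : Prop :=
  u = v ∨ (G.Adj u v ∧ ∃ w, G.Adj u w ∧ G.Adj v w) ∨ ∃ a b, Dia G u v a b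

lemma Dia.tips (h : Dia G p q a b) : Dia G q p a b := by
  obtain ⟨h1, h2, h3, h4, h5, h6, h7⟩ := h
  exact ⟨h1, h4, h5, h2, h3, h6.symm, fun hh => h7 hh.symm⟩

lemma Dia.ctrs (h : Dia G p q a b) : Dia G p q b a := by
  obtain ⟨h1, h2, h3, h4, h5, h6, h7⟩ := h
  exact ⟨h1.symm, h3, h2, h5, h4, h6, h7⟩

lemma R_refl {u : V} : R G u u := Or.inl (Eq.refl u)

lemma R.symm {u v : V} (h : R G u v) : R G v u := by
  rcases h with h | ⟨h1, w, h2, h3⟩ | ⟨a, b, h⟩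
  · exact Or.inl h.symm
  · exact Or.inr (Or.inl ⟨h1.symm, w, h3, h2⟩)
  · exact Or.inr (Or.inr ⟨a, b, h.tips⟩)

lemma R_of_tri {u v w : V} (h1 : G.Adj u v) (h2 : G.Adj u w) (h3 : G.Adj v w) :
    R G u v := Or.inr (Or.inl ⟨h1, w, h2, h3⟩)

section Struct
variable (hd : ∀ v, G.degree v ≤ 3)

include hd

lemma dia_nf_a (h : Dia G p q a b) : G.neighborFinset a = {b, p, q} := by
  obtain ⟨h1, h2, h3, h4, h5, h6, h7⟩ := h
  exact nf_eq_three (hd a) h1 h2.symm h4.symm h3.ne' h5.ne' h6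

lemma dia_nf_b (h : Dia G p q a b) : G.neighborFinset b = {a, p, q} :=
  dia_nf_a hd h.ctrs

lemma adj_a_mem (h : Dia G p q a b) {z : V} (hz : G.Adj a z) : z = b ∨ z = p ∨ z = q := by
  have := dia_nf_a hd h
  have hm : z ∈ G.neighborFinset a := by rwa [SimpleGraph.mem_neighborFinset]
  rw [this] at hm
  simpa using hm

lemma adj_b_mem (h : Dia G p q a b) {z : V} (hz : G.Adj b z) : z = a ∨ z = p ∨ z = q :=
  adj_a_mem hd h.ctrs hz

/-- tip closure -/
lemma CL_D_tip (h : Dia G p q a b) {z : V} (hz : R G p z) :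
    z = p ∨ z = q ∨ z = a ∨ z = b := by
  obtain ⟨h1, h2, h3, h4, h5, h6, h7⟩ := h
  rcases hz with h | ⟨hpz, c, hpc, hzc⟩ | ⟨c, d, k1, k2, k3, k4, k5, k6, k7⟩
  · exact Or.inl h.symm
  · -- triangle partner
    by_contra hcon
    push_neg at hcon
    obtain ⟨zp, zq, za, zb⟩ := hcon
    -- z is a third neighbor of p; c ∈ N(p) = {a,b,z}, Adj z c
    have hcm : c = a ∨ c = b ∨ c = z :=
      mem_of_adj_three (hd p) h2 h3 hpz (h1.ne) za.symm zb.symm hpc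
    rcases hcm with rfl | rfl | rfl
    · rcases adj_a_mem hd ⟨h1, h2, h3, h4, h5, h6, h7⟩ hzc.symm with rfl | rfl | rfl
      · exact zb rfl
      · exact G.irrefl hpz.symm
      · exact h7 hpz
    · rcases adj_b_mem hd ⟨h1, h2, h3, h4, h5, h6, h7⟩ hzc.symm with rfl | rfl | rfl
      · exact za rfl
      · exact G.irrefl hpz.symm
      · exact h7 hpz
    · exact G.irrefl hzc
  · -- diamond partner: c,d ∈ N(p), Adj c d
    by_contra hcon
    push_neg at hcon
    obtain ⟨zp, zq, za, zb⟩ := hcon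
    have hD : Dia G p q a b := ⟨h1, h2, h3, h4, h5, h6, h7⟩
    have hne_cd : c ≠ d := k1.ne
    have hc : c = a ∨ c = b := by
      by_contra hcc
      push_neg at hcc
      obtain ⟨ca, cb⟩ := hcc
      have hdm : d = a ∨ d = b ∨ d = c :=
        mem_of_adj_three (hd p) h2 h3 k2 h1.ne ca.symm cb.symm k3
      rcases hdm with rfl | rfl | rfl
      · rcases adj_a_mem hd hD k1.symm with rfl | rfl | rfl
        · exact cb rfl
        · exact G.irrefl k2
        · exact h7 k2
      · rcases adj_b_mem hd hD k1.symm with rfl | rfl | rfl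
        · exact ca rfl
        · exact G.irrefl k2
        · exact h7 k2
      · exact hne_cd rfl
    have hdm : d = a ∨ d = b := by
      by_contra hcc
      push_neg at hcc
      obtain ⟨da, db⟩ := hcc
      have hcm : c = a ∨ c = b ∨ c = d :=
        mem_of_adj_three (hd p) h2 h3 k3 h1.ne da.symm db.symm k2
      rcases hcm with rfl | rfl | rfl
      · rcases adj_a_mem hd hD k1 with rfl | rfl | rfl
        · exact db rfl
        · exact G.irrefl k3
        · exact h7 k3
      · rcases adj_b_mem hd hD k1 with rfl | rfl | rfl
        · exact da rfl
        · exact G.irrefl k3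
        · exact h7 k3
      · exact hne_cd rfl
    have hza : G.Adj z a ∧ G.Adj z b := by
      rcases hc with rfl | rfl <;> rcases hdm with rfl | rfl
      · exact absurd rfl hne_cd
      · exact ⟨k4, k5⟩
      · exact ⟨k5, k4⟩
      · exact absurd rfl hne_cd
    rcases adj_a_mem hd hD hza.1.symm with rfl | rfl | rfl
    · exact zb rfl
    · exact zp rfl
    · exact zq rfl

/-- center closure -/
lemma CL_D_ctr (h : Dia G p q a b) {z : V} (hz : R G a z) :
    z = p ∨ z = q ∨ z = a ∨ z = b := by
  obtain ⟨h1, h2, h3, h4, h5, h6, h7⟩ := h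
  rcases hz with h | ⟨haz, c, hac, hzc⟩ | ⟨c, d, k1, k2, k3, k4, k5, k6, k7⟩
  · exact Or.inr (Or.inr (Or.inl h.symm))
  · rcases adj_a_mem hd ⟨h1, h2, h3, h4, h5, h6, h7⟩ haz with rfl | rfl | rfl
    · exact Or.inr (Or.inr (Or.inr rfl))
    · exact Or.inl rfl
    · exact Or.inr (Or.inl rfl)
  · -- Dia a z c d : c,d ∈ N(a) = {b,p,q}, Adj c d
    have hc : c = b ∨ c = p ∨ c = q := adj_a_mem hd ⟨h1, h2, h3, h4, h5, h6, h7⟩ k2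
    have hdm : d = b ∨ d = p ∨ d = q := adj_a_mem hd ⟨h1, h2, h3, h4, h5, h6, h7⟩ k3
    have key : (G.Adj z b ∧ G.Adj z p) ∨ (G.Adj z b ∧ G.Adj z q) := by
      rcases hc with rfl | rfl | rfl <;> rcases hdm with rfl | rfl | rfl
      · exact absurd rfl k1.ne
      · exact Or.inl ⟨k4, k5⟩
      · exact Or.inr ⟨k4, k5⟩
      · exact Or.inl ⟨k5, k4⟩
      · exact absurd rfl k1.ne
      · exact absurd k1 h7
      · exact Or.inr ⟨k5, k4⟩
      · exact absurd k1 (fun hh => h7 hh.symm)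
      · exact absurd rfl k1.ne
    rcases key with ⟨zb, zp⟩ | ⟨zb, zq⟩
    · rcases adj_b_mem hd ⟨h1, h2, h3, h4, h5, h6, h7⟩ zb.symm with rfl | rfl | rfl
      · exact absurd rfl k6.symm
      · exact absurd zp (fun hh => G.irrefl hh.symm)
      · exact Or.inr (Or.inl rfl)
    · rcases adj_b_mem hd ⟨h1, h2, h3, h4, h5, h6, h7⟩ zb.symm with rfl | rfl | rfl
      · exact absurd rfl k6.symm
      · exact Or.inl rfl
      · exact absurd zq (fun hh => G.irrefl hh.symm)

omit hd in
lemma R_dia_all (h : Dia G p q a b) {x y : V}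
    (hx : x = p ∨ x = q ∨ x = a ∨ x = b) (hy : y = p ∨ y = q ∨ y = a ∨ y = b) :
    R G x y := by
  obtain ⟨h1, h2, h3, h4, h5, h6, h7⟩ := h
  rcases hx with rfl | rfl | rfl | rfl <;> rcases hy with rfl | rfl | rfl | rfl
  · exact R_refl
  · exact Or.inr (Or.inr ⟨a, b, h1, h2, h3, h4, h5, h6, h7⟩)
  · exact R_of_tri h2 h3 h1
  · exact R_of_tri h3 h2 h1.symm
  · exact Or.inr (Or.inr ⟨a, b, h1, h4, h5, h2, h3, h6.symm, fun hh => h7 hh.symm⟩)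
  · exact R_refl
  · exact R_of_tri h4 h5 h1
  · exact R_of_tri h5 h4 h1.symm
  · exact R_of_tri h2.symm h1 h3
  · exact R_of_tri h4.symm h1 h5
  · exact R_refl
  · exact R_of_tri h1 h2.symm h3.symm
  · exact R_of_tri h3.symm h1.symm h2
  · exact R_of_tri h5.symm h1.symm h4
  · exact R_of_tri h1.symm h3.symm h2.symm
  · exact R_refl

end Struct

lemma closed_all (hc : G.Connected) {S : Finset V} (hne : S.Nonempty)
    (hcl : ∀ u v, u ∈ S → G.Adj u v → v ∈ S) : ∀ z, z ∈ S := by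
  obtain ⟨u0, hu0⟩ := hne
  intro z
  obtain ⟨p⟩ := hc.preconnected u0 z
  clear hc
  induction p with
  | nil => exact hu0
  | cons h p ih => exact ih (hcl _ _ hu0 h)

lemma no_K4 (hd : ∀ v, G.degree v ≤ 3) (hc : G.Connected) (hn : 6 ≤ Fintype.card V)
    {a b c d : V} (hab : G.Adj a b) (hac : G.Adj a c) (had : G.Adj a d)
    (hbc : G.Adj b c) (hbd : G.Adj b d) (hcd : G.Adj c d) : False := by
  set S : Finset V := {a, b, c, d} with hS
  have hmem : ∀ z w, z ∈ S → G.Adj z w → w ∈ S := by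
    intro z w hz hzw
    simp only [hS, mem_insert, mem_singleton] at hz ⊢
    rcases hz with rfl | rfl | rfl | rfl
    · rcases mem_of_adj_three (hd z) hab hac had hbc.ne hbd.ne hcd.ne hzw with rfl | rfl | rfl
      <;> tauto
    · rcases mem_of_adj_three (hd z) hab.symm hbc hbd hac.ne had.ne hcd.ne hzw with rfl | rfl | rfl
      <;> tauto
    · rcases mem_of_adj_three (hd z) hac.symm hbc.symm hcd hab.ne had.ne hbd.ne hzw with rfl | rfl | rfl
      <;> tauto
    · rcases mem_of_adj_three (hd z) had.symm hbd.symm hcd.symm hab.ne hac.ne hbc.ne hzw with rfl | rfl | rfl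
      <;> tauto
  have hall := closed_all hc ⟨a, by simp [hS]⟩ hmem
  have : (univ : Finset V) ⊆ S := fun z _ => hall z
  have hcard := Finset.card_le_card this
  have : S.card ≤ 4 := by
    apply le_trans (Finset.card_insert_le _ _)
    apply Nat.succ_le_succ
    apply le_trans (Finset.card_insert_le _ _)
    apply Nat.succ_le_succ
    apply le_trans (Finset.card_insert_le _ _)
    simp
  simp only [Finset.card_univ] at hcard
  omega

/-- Driver: a triangle extends to a diamond or is "lone". -/
lemma DRV (hd : ∀ v, G.degree v ≤ 3) (hc : G.Connected) (hn : 6 ≤ Fintype.card V)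
    {u v c : V} (huv : G.Adj u v) (huc : G.Adj u c) (hvc : G.Adj v c) :
    (∃ p q a b, Dia G p q a b ∧ (u = p ∨ u = q ∨ u = a ∨ u = b) ∧
      (v = p ∨ v = q ∨ v = a ∨ v = b) ∧ (c = p ∨ c = q ∨ c = a ∨ c = b)) ∨
    (∀ z, z ≠ u → z ≠ v → z ≠ c →
      ¬(G.Adj z u ∧ G.Adj z v) ∧ ¬(G.Adj z u ∧ G.Adj z c) ∧ ¬(G.Adj z v ∧ G.Adj z c)) := by
  by_cases hz : ∃ z, z ≠ u ∧ z ≠ v ∧ z ≠ c ∧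
      ((G.Adj z u ∧ G.Adj z v) ∨ (G.Adj z u ∧ G.Adj z c) ∨ (G.Adj z v ∧ G.Adj z c))
  · left
    obtain ⟨z, h1, h2, h3, hcase⟩ := hz
    rcases hcase with ⟨hzu, hzv⟩ | ⟨hzu, hzc⟩ | ⟨hzv, hzc⟩
    · by_cases hzc : G.Adj z c
      · exact absurd (no_K4 hd hc hn huv huc hzu.symm hvc hzv.symm hzc.symm) (fun h => h)
      · exact ⟨c, z, u, v, ⟨huv, huc.symm, hvc.symm, hzu, hzv, h3.symm, fun h => hzc h.symm⟩,
          by tauto, by tauto, by tauto⟩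
    · by_cases hzv : G.Adj z v
      · exact absurd (no_K4 hd hc hn huv huc hzu.symm hvc hzv.symm hzc.symm) (fun h => h)
      · exact ⟨v, z, u, c, ⟨huc, huv.symm, hvc, hzu, hzc, h2.symm, fun h => hzv h.symm⟩,
          by tauto, by tauto, by tauto⟩
    · by_cases hzu : G.Adj z u
      · exact absurd (no_K4 hd hc hn huv huc hzu.symm hvc hzv.symm hzc.symm) (fun h => h)
      · exact ⟨u, z, v, c, ⟨hvc, huv, huc, hzv, hzc, h1.symm, fun h => hzu h.symm⟩,
          by tauto, by tauto, by tauto⟩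
  · right
    push_neg at hz
    intro z h1 h2 h3
    have := hz z h1 h2 h3
    tauto

/-- lone triangle closure -/
lemma CL_T (hd : ∀ v, G.degree v ≤ 3)
    {u v c : V} (huv : G.Adj u v) (huc : G.Adj u c) (hvc : G.Adj v c)
    (hext : ∀ z, z ≠ u → z ≠ v → z ≠ c →
      ¬(G.Adj z u ∧ G.Adj z v) ∧ ¬(G.Adj z u ∧ G.Adj z c) ∧ ¬(G.Adj z v ∧ G.Adj z c))
    {z : V} (hz : R G u z) : z = u ∨ z = v ∨ z = c := by
  rcases hz with h | ⟨huz, e, hue, hze⟩ | ⟨a, b, k1, k2, k3, k4, k5, k6, k7⟩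
  · exact Or.inl h.symm
  · by_contra hcon
    push_neg at hcon
    obtain ⟨h1, h2, h3⟩ := hcon
    -- z is third neighbor of u, e ∈ {v,c,z}, Adj z e
    rcases mem_of_adj_three (hd u) huv huc huz hvc.ne h2.symm h3.symm hue with rfl | rfl | rfl
    · exact ((hext z huz.ne' h2 h3).1 ⟨huz.symm, hze⟩)
    · exact ((hext z huz.ne' h2 h3).2.1 ⟨huz.symm, hze⟩)
    · exact G.irrefl hze
  · -- Dia u z a b : a, b ∈ N(u), Adj a b
    by_contra hcon
    push_neg at hcon
    obtain ⟨h1, h2, h3⟩ := hcon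
    have hane : a ≠ u := fun h => G.irrefl (h ▸ k2)
    have hbne : b ≠ u := fun h => G.irrefl (h ▸ k3)
    have ha : a = v ∨ a = c := by
      by_contra hcc
      push_neg at hcc
      obtain ⟨av, ac⟩ := hcc
      -- a third nbr of u → b ∈ {v,c}
      have : b = v ∨ b = c ∨ b = a :=
        mem_of_adj_three (hd u) huv huc k2 hvc.ne av.symm ac.symm k3
      rcases this with rfl | rfl | rfl
      · exact (hext a hane av ac).1 ⟨k2.symm, k1⟩
      · exact (hext a hane av ac).2.1 ⟨k2.symm, k1⟩
      · exact G.irrefl k1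
    have hb : b = v ∨ b = c := by
      by_contra hcc
      push_neg at hcc
      obtain ⟨bv, bc⟩ := hcc
      have : a = v ∨ a = c ∨ a = b :=
        mem_of_adj_three (hd u) huv huc k3 hvc.ne bv.symm bc.symm k2
      rcases this with rfl | rfl | rfl
      · exact (hext b hbne bv bc).1 ⟨k3.symm, k1.symm⟩
      · exact (hext b hbne bv bc).2.1 ⟨k3.symm, k1.symm⟩
      · exact G.irrefl k1
    have hzvc : G.Adj z v ∧ G.Adj z c := by
      rcases ha with rfl | rfl <;> rcases hb with rfl | rfl
      · exact absurd rfl k1.ne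
      · exact ⟨k4, k5⟩
      · exact ⟨k5, k4⟩
      · exact absurd rfl k1.ne
    exact (hext z (Ne.symm k6) h2 h3).2.2 hzvc
  
lemma R_trans (hd : ∀ v, G.degree v ≤ 3) (hc : G.Connected) (hn : 6 ≤ Fintype.card V)
    {u v w : V} (h1 : R G u v) (h2 : R G v w) : R G u w := by
  rcases h1 with rfl | ⟨huv, c, huc, hvc⟩ | ⟨a, b, hD⟩
  · exact h2
  · -- triangle u v c
    rcases DRV hd hc hn huv huc hvc with ⟨p, q, a, b, hD, hu, hv, hcm⟩ | hext
    · -- diamond case: w in the diamond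
      have hw : w = p ∨ w = q ∨ w = a ∨ w = b := by
        rcases hv with rfl | rfl | rfl | rfl
        · exact CL_D_tip hd hD h2
        · have := CL_D_tip hd hD.tips h2; tauto
        · exact CL_D_ctr hd hD h2
        · have := CL_D_ctr hd hD.ctrs h2; tauto
      exact R_dia_all hD hu hw
    · -- lone case
      have hext' : ∀ z, z ≠ v → z ≠ u → z ≠ c →
          ¬(G.Adj z v ∧ G.Adj z u) ∧ ¬(G.Adj z v ∧ G.Adj z c) ∧ ¬(G.Adj z u ∧ G.Adj z c) := by
        intro z a1 a2 a3
        have := hext z a2 a1 a3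
        tauto
      rcases CL_T hd huv.symm hvc huc hext' h2 with rfl | rfl | rfl
      · exact Or.inr (Or.inl ⟨huv, c, huc, hvc⟩)
      · exact R_refl
      · exact R_of_tri huc huv hvc.symm
  · -- diamond u v
    have hw : w = v ∨ w = u ∨ w = a ∨ w = b := CL_D_tip hd hD.tips h2
    exact R_dia_all hD (Or.inl rfl) (by tauto)


def extPairs (G : SimpleGraph V) [DecidableRel G.Adj] (S : Finset V) : Finset (V × V) :=
  S.biUnion fun z => {z} ×ˢ (G.neighborFinset z \ S)

lemma extPairs_card (S : Finset V) :
    (extPairs G S).card = ∑ z ∈ S, (G.neighborFinset z \ S).card := by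
  rw [extPairs, Finset.card_biUnion]
  · apply Finset.sum_congr rfl
    intro z _
    rw [Finset.card_product, Finset.card_singleton, one_mul]
  · intro x _ y _ hxy
    rw [Function.onFun, Finset.disjoint_left]
    rintro ⟨p1, p2⟩ hp hq
    rw [Finset.mem_product, Finset.mem_singleton] at hp hq
    exact hxy (hp.1 ▸ hq.1 ▸ rfl)

lemma mem_extPairs {S : Finset V} {e : V × V} :
    e ∈ extPairs G S ↔ e.1 ∈ S ∧ e.2 ∈ G.neighborFinset e.1 \ S := by
  simp only [extPairs, Finset.mem_biUnion, Finset.mem_product, Finset.mem_singleton]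
  constructor
  · rintro ⟨z, hz, rfl, h2⟩
    exact ⟨hz, h2⟩
  · rintro ⟨h1, h2⟩
    exact ⟨e.1, h1, rfl, h2⟩

lemma sdiff_card_zero {u : V} {S : Finset V} (h : G.neighborFinset u ⊆ S) :
    (G.neighborFinset u \ S).card = 0 := by
  rw [Finset.card_eq_zero, Finset.sdiff_eq_empty_iff_subset]
  exact h

/-- tip/lone-triangle vertex dichotomy -/
lemma lone_vx (hd : ∀ v, G.degree v ≤ 3) {u v c : V}
    (huv : G.Adj u v) (huc : G.Adj u c) (hvc : G.Adj v c)
    (hnvt : ∀ t, G.Adj u t → t ≠ v → t ≠ c → ¬ G.Adj v t ∧ ¬ G.Adj c t)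
    {S : Finset V} (hvS : v ∈ S) (hcS : c ∈ S) :
    (localCC G u = 1 ∧ (G.neighborFinset u \ S).card = 0) ∨
    (localCC G u = 1/3 ∧ (G.neighborFinset u \ S).card ≤ 1) := by
  have h2le : 2 ≤ G.degree u := by
    have hsub : ({v, c} : Finset V) ⊆ G.neighborFinset u := by
      intro z hz
      simp only [mem_insert, mem_singleton] at hz
      rcases hz with rfl | rfl <;> simp [SimpleGraph.mem_neighborFinset, huv, huc]
    calc 2 = ({v, c} : Finset V).card := (card_pair hvc.ne).symm
    _ ≤ _ := card_le_card hsub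
  have h23 : G.degree u = 2 ∨ G.degree u = 3 := by have := hd u; omega
  rcases h23 with h2 | h3
  · left
    refine ⟨localCC_deg2_tri h2 huv huc hvc, sdiff_card_zero ?_⟩
    rw [nf_eq_two h2.le huv huc hvc.ne]
    intro z hz
    simp only [mem_insert, mem_singleton] at hz
    rcases hz with rfl | rfl <;> assumption
  · right
    have hnsub : ¬ G.neighborFinset u ⊆ {v, c} := by
      intro hsub
      have := card_le_card hsub
      rw [card_pair hvc.ne] at this
      have : G.degree u ≤ 2 := this
      omega
    obtain ⟨t, ht, htn⟩ := Finset.not_subset.mp hnsub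
    simp only [mem_insert, mem_singleton] at htn
    push_neg at htn
    obtain ⟨tv, tc⟩ := htn
    rw [SimpleGraph.mem_neighborFinset] at ht
    obtain ⟨nvt, nct⟩ := hnvt t ht tv tc
    have hnf : G.neighborFinset u = {v, c, t} :=
      nf_eq_three (hd u) huv huc ht hvc.ne (Ne.symm tv) (Ne.symm tc)
    refine ⟨?_, ?_⟩
    · rw [localCC_deg3 h3, nbrE_deg3_one h3 huv huc ht hvc.ne (Ne.symm tv) (Ne.symm tc) hvc nvt nct]
      norm_num
    · have : G.neighborFinset u \ S ⊆ {t} := by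
        intro z hz
        rw [Finset.mem_sdiff, hnf] at hz
        simp only [mem_insert, mem_singleton] at hz ⊢
        rcases hz.1 with rfl | rfl | rfl
        · exact absurd hvS hz.2
        · exact absurd hcS hz.2
        · rfl
      calc _ ≤ ({t} : Finset V).card := card_le_card this
      _ = 1 := card_singleton t

lemma dia_ctr_vx (hd : ∀ v, G.degree v ≤ 3) (hD : Dia G p q a b)
    {S : Finset V} (hbS : b ∈ S) (hpS : p ∈ S) (hqS : q ∈ S) :
    localCC G a = 2/3 ∧ (G.neighborFinset a \ S).card = 0 := by
  obtain ⟨h1, h2, h3, h4, h5, h6, h7⟩ := hD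
  have hnf : G.neighborFinset a = {b, p, q} := dia_nf_a hd ⟨h1, h2, h3, h4, h5, h6, h7⟩
  have h3d : G.degree a = 3 := by
    rw [SimpleGraph.degree, hnf]
    rw [card_insert_of_notMem (by simp [h3.ne', h5.ne']), card_pair h6]
  constructor
  · rw [localCC_deg3 h3d,
      nbrE_deg3_two h3d h1 h2.symm h4.symm h3.ne' h5.ne' h6 h3.symm h5.symm h7]
    norm_num
  · apply sdiff_card_zero
    rw [hnf]
    intro z hz
    simp only [mem_insert, mem_singleton] at hz
    rcases hz with rfl | rfl | rfl <;> assumption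

lemma dia_tip_vx (hd : ∀ v, G.degree v ≤ 3) (hD : Dia G p q a b)
    {S : Finset V} (haS : a ∈ S) (hbS : b ∈ S) :
    (localCC G p = 1 ∧ (G.neighborFinset p \ S).card = 0) ∨
    (localCC G p = 1/3 ∧ (G.neighborFinset p \ S).card ≤ 1) := by
  obtain ⟨h1, h2, h3, h4, h5, h6, h7⟩ := hD
  apply lone_vx hd h2 h3 h1 ?_ haS hbS
  intro t hpt ta tb
  constructor
  · intro hat
    rcases adj_a_mem hd ⟨h1, h2, h3, h4, h5, h6, h7⟩ hat with rfl | rfl | rfl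
    · exact tb rfl
    · exact G.irrefl hpt
    · exact h7 hpt
  · intro hbt
    rcases adj_b_mem hd ⟨h1, h2, h3, h4, h5, h6, h7⟩ hbt with rfl | rfl | rfl
    · exact ta rfl
    · exact G.irrefl hpt
    · exact h7 hpt

/-- Per-class bound : plain vertex -/
lemma plain_bound (hd : ∀ v, G.degree v ≤ 3) {u : V}
    (hnt : ∀ v w, G.Adj u v → G.Adj u w → ¬ G.Adj v w) :
    (∑ z ∈ ({u} : Finset V), localCC G z) + 7/12 * ((extPairs G {u}).card : ℝ)
      ≤ 7/12 * (({u} : Finset V).card : ℝ) + 14/12 := by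
  rw [Finset.sum_singleton, localCC_of_no_tri hnt, extPairs_card, Finset.sum_singleton]
  have hle : (G.neighborFinset u \ {u}).card ≤ 3 := by
    calc _ ≤ (G.neighborFinset u).card := card_le_card (Finset.sdiff_subset)
    _ ≤ 3 := hd u
  have : ((G.neighborFinset u \ {u}).card : ℝ) ≤ 3 := by exact_mod_cast hle
  simp only [Finset.card_singleton, Nat.cast_one]
  linarith

/-- Per-class bound : lone triangle -/
lemma lone_bound (hd : ∀ v, G.degree v ≤ 3) (hc : G.Connected) (hn : 6 ≤ Fintype.card V)
    {u v c : V} (huv : G.Adj u v) (huc : G.Adj u c) (hvc : G.Adj v c)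
    (hext : ∀ z, z ≠ u → z ≠ v → z ≠ c →
      ¬(G.Adj z u ∧ G.Adj z v) ∧ ¬(G.Adj z u ∧ G.Adj z c) ∧ ¬(G.Adj z v ∧ G.Adj z c)) :
    (∑ z ∈ ({u, v, c} : Finset V), localCC G z) + 7/12 * ((extPairs G {u, v, c}).card : ℝ)
      ≤ 7/12 * (({u, v, c} : Finset V).card : ℝ) + 14/12 := by
  have huv' : u ≠ v := huv.ne
  have huc' : u ≠ c := huc.ne
  have hvc' : v ≠ c := hvc.ne
  have hmu : u ∈ ({u, v, c} : Finset V) := by simp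
  have hmv : v ∈ ({u, v, c} : Finset V) := by simp
  have hmc : c ∈ ({u, v, c} : Finset V) := by simp
  have hcard : ({u, v, c} : Finset V).card = 3 := by
    rw [card_insert_of_notMem (by simp [huv', huc']), card_pair hvc']
  -- vertex dichotomies
  have hu := lone_vx hd huv huc hvc (fun t hut htv htc => by
    have hne : t ≠ u := hut.ne'
    have := hext t hne htv htc
    exact ⟨fun h => this.1 ⟨hut.symm, h.symm⟩, fun h => this.2.1 ⟨hut.symm, h.symm⟩⟩) hmv hmc
  have hv := lone_vx hd huv.symm hvc huc (fun t hvt htu htc => by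
    have hne : t ≠ v := hvt.ne'
    have := hext t htu hne htc
    exact ⟨fun h => this.1 ⟨h.symm, hvt.symm⟩, fun h => this.2.2 ⟨hvt.symm, h.symm⟩⟩) hmu hmc
  have hcx := lone_vx hd huc.symm hvc.symm huv (fun t hct htu htv => by
    have hne : t ≠ c := hct.ne'
    have := hext t htu htv hne
    exact ⟨fun h => this.2.1 ⟨h.symm, hct.symm⟩, fun h => this.2.2 ⟨h.symm, hct.symm⟩⟩) hmu hmv
  -- expand sums
  rw [extPairs_card]
  rw [Finset.sum_insert (by simp [huv', huc']), Finset.sum_insert (by simp [hvc']),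
    Finset.sum_singleton, Finset.sum_insert (by simp [huv', huc']),
    Finset.sum_insert (by simp [hvc']), Finset.sum_singleton, hcard]
  -- not all three can be closed (degree 2)
  have hnotall : ¬ ((G.neighborFinset u \ {u, v, c}).card = 0 ∧
      (G.neighborFinset v \ {u, v, c}).card = 0 ∧
      (G.neighborFinset c \ {u, v, c}).card = 0) := by
    rintro ⟨e1, e2, e3⟩
    have hclosed : ∀ y z, y ∈ ({u, v, c} : Finset V) → G.Adj y z → z ∈ ({u, v, c} : Finset V) := by
      intro y z hy hyz
      have hsub : ∀ w, (G.neighborFinset w \ ({u, v, c} : Finset V)).card = 0 →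
          G.neighborFinset w ⊆ {u, v, c} := by
        intro w hw
        rw [Finset.card_eq_zero, Finset.sdiff_eq_empty_iff_subset] at hw
        exact hw
      simp only [mem_insert, mem_singleton] at hy
      rcases hy with rfl | rfl | rfl
      · exact hsub _ e1 (by rwa [SimpleGraph.mem_neighborFinset])
      · exact hsub _ e2 (by rwa [SimpleGraph.mem_neighborFinset])
      · exact hsub _ e3 (by rwa [SimpleGraph.mem_neighborFinset])
    have hall := closed_all hc ⟨u, hmu⟩ hclosed
    have : (univ : Finset V) ⊆ {u, v, c} := fun z _ => hall z
    have h1 := Finset.card_le_card this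
    rw [Finset.card_univ, hcard] at h1
    omega
  -- case analysis
  rcases hu with ⟨c1, e1⟩ | ⟨c1, e1⟩ <;> rcases hv with ⟨c2, e2⟩ | ⟨c2, e2⟩ <;>
    rcases hcx with ⟨c3, e3⟩ | ⟨c3, e3⟩
  · exact absurd ⟨e1, e2, e3⟩ hnotall
  all_goals {
    rw [c1, c2, c3]
    try rw [e1]
    try rw [e2]
    try rw [e3]
    push_cast
    have f1 : ((G.neighborFinset u \ ({u, v, c} : Finset V)).card : ℝ) ≤ 1 := by
      first | exact_mod_cast e1 | norm_num [e1]
    have f2 : ((G.neighborFinset v \ ({u, v, c} : Finset V)).card : ℝ) ≤ 1 := by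
      first | exact_mod_cast e2 | norm_num [e2]
    have f3 : ((G.neighborFinset c \ ({u, v, c} : Finset V)).card : ℝ) ≤ 1 := by
      first | exact_mod_cast e3 | norm_num [e3]
    linarith }

/-- Per-class bound : diamond -/
lemma dia_bound (hd : ∀ v, G.degree v ≤ 3) (hD : Dia G p q a b) :
    (∑ z ∈ ({p, q, a, b} : Finset V), localCC G z) + 7/12 * ((extPairs G {p, q, a, b}).card : ℝ)
      ≤ 7/12 * (({p, q, a, b} : Finset V).card : ℝ) + 14/12 := by
  obtain ⟨h1, h2, h3, h4, h5, h6, h7⟩ := hD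
  have hD' : Dia G p q a b := ⟨h1, h2, h3, h4, h5, h6, h7⟩
  have pq : p ≠ q := h6
  have pa : p ≠ a := h2.ne
  have pb : p ≠ b := h3.ne
  have qa : q ≠ a := h4.ne
  have qb : q ≠ b := h5.ne
  have ab : a ≠ b := h1.ne
  have hma : a ∈ ({p, q, a, b} : Finset V) := by simp
  have hmb : b ∈ ({p, q, a, b} : Finset V) := by simp
  have hmp : p ∈ ({p, q, a, b} : Finset V) := by simp
  have hmq : q ∈ ({p, q, a, b} : Finset V) := by simp
  have hcard : ({p, q, a, b} : Finset V).card = 4 := by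
    rw [card_insert_of_notMem (by simp [pq, pa, pb]),
      card_insert_of_notMem (by simp [qa, qb]), card_pair ab]
  have hA := dia_ctr_vx hd hD' hmb hmp hmq
  have hB := dia_ctr_vx hd hD'.ctrs hma hmp hmq
  have hP := dia_tip_vx hd hD' hma hmb
  have hQ := dia_tip_vx hd hD'.tips hma hmb
  rw [extPairs_card]
  rw [Finset.sum_insert (by simp [pq, pa, pb]), Finset.sum_insert (by simp [qa, qb]),
    Finset.sum_insert (by simp [ab]), Finset.sum_singleton,
    Finset.sum_insert (by simp [pq, pa, pb]), Finset.sum_insert (by simp [qa, qb]),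
    Finset.sum_insert (by simp [ab]), Finset.sum_singleton, hcard]
  rw [hA.1, hA.2, hB.1, hB.2]
  rcases hP with ⟨c1, e1⟩ | ⟨c1, e1⟩ <;> rcases hQ with ⟨c2, e2⟩ | ⟨c2, e2⟩
  all_goals {
    rw [c1, c2]
    try rw [e1]
    try rw [e2]
    push_cast
    have f1 : ((G.neighborFinset p \ ({p, q, a, b} : Finset V)).card : ℝ) ≤ 1 := by
      first | exact_mod_cast e1 | norm_num [e1]
    have f2 : ((G.neighborFinset q \ ({p, q, a, b} : Finset V)).card : ℝ) ≤ 1 := by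
      first | exact_mod_cast e2 | norm_num [e2]
    linarith }


noncomputable def classSet (G : SimpleGraph V) (u : V) : Finset V :=
  @Finset.filter _ (R G u) (Classical.decPred _) univ

lemma mem_classSet {u z : V} : z ∈ classSet G u ↔ R G u z := by
  simp only [classSet, Finset.mem_filter, Finset.mem_univ, true_and]

lemma classSet_plain {u : V} (hnt : ∀ v w, G.Adj u v → G.Adj u w → ¬ G.Adj v w) :
    classSet G u = {u} := by
  ext z
  rw [mem_classSet, mem_singleton]
  constructor
  · rintro (rfl | ⟨huz, w', h1, h2⟩ | ⟨a, b, k1, k2, k3, -⟩)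
    · rfl
    · exact absurd h2 (hnt z w' huz h1)
    · exact absurd k1 (hnt a b k2 k3)
  · rintro rfl
    exact R_refl

lemma classSet_lone (hd : ∀ v, G.degree v ≤ 3)
    {u v c : V} (huv : G.Adj u v) (huc : G.Adj u c) (hvc : G.Adj v c)
    (hext : ∀ z, z ≠ u → z ≠ v → z ≠ c →
      ¬(G.Adj z u ∧ G.Adj z v) ∧ ¬(G.Adj z u ∧ G.Adj z c) ∧ ¬(G.Adj z v ∧ G.Adj z c)) :
    classSet G u = {u, v, c} := by
  ext z
  rw [mem_classSet]
  simp only [mem_insert, mem_singleton]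
  constructor
  · intro h
    exact CL_T hd huv huc hvc hext h
  · rintro (rfl | rfl | rfl)
    · exact R_refl
    · exact R_of_tri huv huc hvc
    · exact R_of_tri huc huv hvc.symm

lemma classSet_dia (hd : ∀ v, G.degree v ≤ 3) (hc : G.Connected) (hn : 6 ≤ Fintype.card V)
    {p q a b m : V} (hD : Dia G p q a b) (hm : m = p ∨ m = q ∨ m = a ∨ m = b) :
    classSet G m = {p, q, a, b} := by
  ext z
  rw [mem_classSet]
  simp only [mem_insert, mem_singleton]
  constructor
  · intro h
    have hpm : R G p m := R_dia_all hD (Or.inl rfl) hm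
    exact CL_D_tip hd hD (R_trans hd hc hn hpm h)
  · intro h
    exact R_dia_all hD hm h

lemma class_bound (hd : ∀ v, G.degree v ≤ 3) (hc : G.Connected) (hn : 6 ≤ Fintype.card V)
    (u : V) :
    (∑ z ∈ classSet G u, localCC G z) + 7/12 * ((extPairs G (classSet G u)).card : ℝ)
      ≤ 7/12 * ((classSet G u).card : ℝ) + 14/12 := by
  by_cases htri : ∃ v w, G.Adj u v ∧ G.Adj u w ∧ G.Adj v w
  · obtain ⟨v, w, h1, h2, h3⟩ := htri
    rcases DRV hd hc hn h1 h2 h3 with ⟨p, q, a, b, hD, hu, hv, hw⟩ | hext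
    · rw [classSet_dia hd hc hn hD hu]
      exact dia_bound hd hD
    · rw [classSet_lone hd h1 h2 h3 hext]
      exact lone_bound hd hc hn h1 h2 h3 hext
  · push_neg at htri
    rw [classSet_plain htri]
    exact plain_bound hd htri

/-- quotient graph -/
def Hq (s : Setoid V) (G : SimpleGraph V) : SimpleGraph (Quotient s) where
  Adj x y := x ≠ y ∧ ∃ u' v', Quotient.mk s u' = x ∧ Quotient.mk s v' = y ∧ G.Adj u' v'
  symm := by
    constructor
    rintro x y ⟨hne, u', v', rfl, rfl, hadj⟩
    exact ⟨hne.symm, v', u', rfl, rfl, hadj.symm⟩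
  loopless := ⟨fun x h => h.1 rfl⟩

lemma Hq_connected (s : Setoid V) (hc : G.Connected) : (Hq s G).Connected := by
  have key : ∀ u v : V, G.Adj u v →
      (Hq s G).Reachable (Quotient.mk s u) (Quotient.mk s v) := by
    intro u v huv
    by_cases h : Quotient.mk s u = Quotient.mk s v
    · rw [h]
    · exact SimpleGraph.Adj.reachable ⟨h, u, v, rfl, rfl, huv⟩
  have reach : ∀ u v : V, G.Reachable u v →
      (Hq s G).Reachable (Quotient.mk s u) (Quotient.mk s v) := by
    intro u v ⟨p⟩
    induction p with
    | nil => rfl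
    | cons h p ih => exact (key _ _ h).trans ih
  rw [SimpleGraph.connected_iff]
  refine ⟨?_, ?_⟩
  · intro x y
    obtain ⟨u, rfl⟩ := Quotient.exists_rep x
    obtain ⟨v, rfl⟩ := Quotient.exists_rep y
    exact reach u v (hc.preconnected u v)
  · exact ⟨Quotient.mk s hc.nonempty.some⟩


end Helpers

lemma detour_reach {W : Type*} {H : SimpleGraph W} {v w : W}
    (h : (H \ SimpleGraph.fromEdgeSet {s(v, w)}).Reachable v w) :
    ∀ a b : W, H.Reachable a b → (H \ SimpleGraph.fromEdgeSet {s(v, w)}).Reachable a b := by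
  intro a b ⟨p⟩
  induction p with
  | nil => exact SimpleGraph.Reachable.refl _
  | @cons a c b hadj p ih =>
    refine SimpleGraph.Reachable.trans ?_ ih
    by_cases he : s(a, c) = s(v, w)
    · rw [Sym2.eq_iff] at he
      rcases he with ⟨rfl, rfl⟩ | ⟨rfl, rfl⟩
      · exact h
      · exact h.symm
    · exact SimpleGraph.Adj.reachable ⟨hadj, by
        simp only [SimpleGraph.fromEdgeSet_adj, Set.mem_singleton_iff]
        rintro ⟨he', -⟩
        exact he he'⟩

lemma conn_card_le_aux {W : Type*} [Fintype W] :
    ∀ (m : ℕ) (H : SimpleGraph W), H.Connected → Nat.card H.edgeSet ≤ m →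
      Fintype.card W ≤ m + 1 := by
  intro m
  induction m with
  | zero =>
    intro H hc hm
    by_cases hac : H.IsAcyclic
    · classical
      have ht : H.IsTree := ⟨hc, hac⟩
      have := ht.card_edgeFinset
      rw [SimpleGraph.edgeFinset_card] at this
      have h1 : Fintype.card W ≠ 0 := by
        have := hc.nonempty
        simp [Fintype.card_ne_zero]
      rw [Nat.card_eq_fintype_card] at hm
      omega
    · exfalso
      rw [SimpleGraph.IsAcyclic] at hac
      push_neg at hac
      obtain ⟨v, c, hcyc⟩ := hac
      cases c with
      | nil => exact hcyc.ne_nil rfl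
      | @cons _ b _ hadj p =>
        have hmem : s(v, b) ∈ H.edgeSet := hadj
        have : Nat.card H.edgeSet ≠ 0 := by
          rw [Nat.card_ne_zero]
          exact ⟨⟨⟨_, hmem⟩⟩, Set.toFinite _⟩
        omega
  | succ m ih =>
    intro H hc hm
    by_cases hac : H.IsAcyclic
    · classical
      have ht : H.IsTree := ⟨hc, hac⟩
      have := ht.card_edgeFinset
      rw [SimpleGraph.edgeFinset_card] at this
      have h1 : Fintype.card W ≠ 0 := by
        have := hc.nonempty
        simp [Fintype.card_ne_zero]
      rw [Nat.card_eq_fintype_card] at hm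
      omega
    · rw [SimpleGraph.IsAcyclic] at hac
      push_neg at hac
      obtain ⟨v, c, hcyc⟩ := hac
      cases c with
      | nil => exact absurd rfl hcyc.ne_nil
      | @cons _ b _ hadj p =>
        have hmem : s(v, b) ∈ (SimpleGraph.Walk.cons hadj p).edges := by
          simp [SimpleGraph.Walk.edges_cons]
        have key := (SimpleGraph.adj_and_reachable_delete_edges_iff_exists_cycle
          (G := H) (v := v) (w := b)).mpr ⟨v, _, hcyc, hmem⟩
        set H' := H \ SimpleGraph.fromEdgeSet {s(v, b)} with hH'
        have hc' : H'.Connected := by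
          rw [SimpleGraph.connected_iff]
          exact ⟨fun a b' => detour_reach key.2 a b' (hc.preconnected a b'), hc.nonempty⟩
        have hes : H'.edgeSet = H.edgeSet \ {s(v, b)} := by
          rw [hH', SimpleGraph.edgeSet_sdiff, SimpleGraph.edgeSet_fromEdgeSet]
          ext e
          simp only [Set.mem_diff, Set.mem_singleton_iff, Set.mem_setOf_eq]
          constructor
          · rintro ⟨h1, h2⟩
            refine ⟨h1, fun hh => h2 ⟨hh, ?_⟩⟩
            subst hh
            exact (Sym2.mk_isDiag_iff).not.mpr key.1.ne
          · rintro ⟨h1, h2⟩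
            exact ⟨h1, fun hh => h2 hh.1⟩
        have hcard : Nat.card H'.edgeSet ≤ m := by
          have hfin : H.edgeSet.Finite := Set.toFinite _
          have hmem' : s(v, b) ∈ H.edgeSet := key.1
          have h2 : (H.edgeSet \ {s(v, b)}).ncard = H.edgeSet.ncard - 1 :=
            Set.ncard_diff_singleton_of_mem hmem'
          rw [hes, Nat.card_coe_set_eq, h2]
          rw [Nat.card_coe_set_eq] at hm
          have hpos : 0 < H.edgeSet.ncard := by
            rw [Set.ncard_pos hfin]
            exact ⟨_, hmem'⟩
          omega
        have := ih H' hc' hcard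
        omega

lemma conn_card_le_edges {W : Type*} [Fintype W] (H : SimpleGraph W) (hc : H.Connected) :
    Fintype.card W ≤ Nat.card H.edgeSet + 1 :=
  conn_card_le_aux _ H hc le_rfl


section Main
variable {V : Type*} [Fintype V] [DecidableEq V] {G : SimpleGraph V} [DecidableRel G.Adj]

/-- main bound -/
lemma sum_bound (hd : ∀ v, G.degree v ≤ 3) (hc : G.Connected) (hn : 6 ≤ Fintype.card V) :
    ∑ u, localCC G u ≤ 7/12 * (Fintype.card V : ℝ) + 14/12 := by
  classical
  set s : Setoid V := ⟨R G, ⟨fun _ => R_refl, fun h => h.symm, fun h1 h2 => R_trans hd hc hn h1 h2⟩⟩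
    with hs
  haveI : DecidableEq (Quotient s) := Classical.decEq _
  haveI : Fintype (Quotient s) := Fintype.ofFinite _
  set H : SimpleGraph (Quotient s) := Hq s G with hH
  haveI : DecidableRel H.Adj := fun _ _ => Classical.dec _
  have hfib : ∀ u : V,
      (univ.filter fun z => Quotient.mk s z = Quotient.mk s u) = classSet G u := by
    intro u
    ext z
    rw [mem_filter, mem_classSet]
    constructor
    · rintro ⟨-, h⟩
      exact (Quotient.eq.mp h : R G z u).symm
    · intro h
      exact ⟨mem_univ z, Quotient.eq.mpr (h.symm : R G z u)⟩
  -- degree bound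
  have hdegH : ∀ u : V, (H.degree (Quotient.mk s u) : ℝ) ≤ ((extPairs G (classSet G u)).card : ℝ) := by
    intro u
    have : H.degree (Quotient.mk s u) ≤ (extPairs G (classSet G u)).card := by
      rw [SimpleGraph.degree]
      have hne : Nonempty (V × V) := ⟨(u, u)⟩
      apply Finset.card_le_card_of_injOn
        (f := fun y => if h : H.Adj (Quotient.mk s u) y then
          (h.2.choose, h.2.choose_spec.choose) else Classical.arbitrary _)
      · intro y hy
        simp only [Finset.mem_coe] at hy ⊢
        rw [SimpleGraph.mem_neighborFinset] at hy
        rw [dif_pos hy]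
        obtain ⟨h1, h2, h3⟩ := hy.2.choose_spec.choose_spec
        rw [mem_extPairs]
        constructor
        · rw [← hfib u, mem_filter]
          exact ⟨mem_univ _, h1⟩
        · rw [Finset.mem_sdiff, SimpleGraph.mem_neighborFinset]
          refine ⟨h3, ?_⟩
          rw [← hfib u, mem_filter]
          rintro ⟨-, hmem⟩
          refine hy.1 ?_
          rw [← hmem]
          exact h2
      · intro y1 hy1 y2 hy2 heq
        rw [Finset.mem_coe, SimpleGraph.mem_neighborFinset] at hy1 hy2
        simp only [dif_pos hy1, dif_pos hy2, Prod.mk.injEq] at heq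
        obtain ⟨-, g2, -⟩ := hy1.2.choose_spec.choose_spec
        obtain ⟨-, k2, -⟩ := hy2.2.choose_spec.choose_spec
        rw [← g2, ← k2, heq.2]
    exact_mod_cast this
  -- per-class inequality, summed
  have hper : ∀ x : Quotient s,
      (∑ z ∈ univ.filter fun z => Quotient.mk s z = x, localCC G z)
        ≤ 7/12 * ((univ.filter fun z => Quotient.mk s z = x).card : ℝ)
          + 14/12 - 7/12 * (H.degree x : ℝ) := by
    intro x
    obtain ⟨u, rfl⟩ := Quotient.exists_rep x
    rw [hfib u]
    have h1 := class_bound hd hc hn u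
    have h2 := hdegH u
    linarith
  have hsplit : ∑ u, localCC G u
      = ∑ x : Quotient s, ∑ z ∈ univ.filter fun z => Quotient.mk s z = x, localCC G z := by
    exact (Finset.sum_fiberwise univ (fun z => Quotient.mk s z) (localCC G)).symm
  have hcardsplit : (Fintype.card V : ℝ)
      = ∑ x : Quotient s, ((univ.filter fun z => Quotient.mk s z = x).card : ℝ) := by
    rw [← Nat.cast_sum]
    congr 1
    rw [← Finset.card_univ]
    exact Finset.card_eq_sum_card_fiberwise (fun z _ => mem_univ _)
  have hdegsum : ∑ x : Quotient s, (H.degree x : ℝ) = 2 * (H.edgeFinset.card : ℝ) := by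
    rw [← Nat.cast_sum]
    rw [SimpleGraph.sum_degrees_eq_twice_card_edges]
    push_cast
    ring
  have hNm : (Fintype.card (Quotient s) : ℝ) ≤ (H.edgeFinset.card : ℝ) + 1 := by
    have := conn_card_le_edges H (Hq_connected s hc)
    have h2 : Nat.card H.edgeSet = H.edgeFinset.card := by
      rw [SimpleGraph.edgeFinset_card, Nat.card_eq_fintype_card]
    rw [h2] at this
    exact_mod_cast this
  calc ∑ u, localCC G u
      = ∑ x : Quotient s, ∑ z ∈ univ.filter fun z => Quotient.mk s z = x, localCC G z := hsplit
    _ ≤ ∑ x : Quotient s, (7/12 * ((univ.filter fun z => Quotient.mk s z = x).card : ℝ)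
          + 14/12 - 7/12 * (H.degree x : ℝ)) := Finset.sum_le_sum fun x _ => hper x
    _ = 7/12 * (Fintype.card V : ℝ) + 14/12 * (Fintype.card (Quotient s) : ℝ)
          - 7/12 * (2 * (H.edgeFinset.card : ℝ)) := by
        rw [Finset.sum_sub_distrib, Finset.sum_add_distrib, ← Finset.mul_sum, ← Finset.mul_sum,
          hcardsplit, hdegsum, Finset.sum_const, Finset.card_univ]
        push_cast
        ring
    _ ≤ 7/12 * (Fintype.card V : ℝ) + 14/12 := by nlinarith [hNm]


end Main

/-- A connected subcubic graph of order `n ≥ 6` with `n ≡ 2 (mod 4)` has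
clustering coefficient at most `7/12 + 14/(12 * (Fintype.card V : ℝ))`. -/
theorem subcubic_clustering_mod2 {V : Type*} [Fintype V] (G : SimpleGraph V)
    (hconn : G.Connected) (hdeg : ∀ v, deg G v ≤ 3)
    (hn : 6 ≤ Fintype.card V) (hmod : Fintype.card V % 4 = 2) :
    cc G ≤ 7/12 + 14/(12 * (Fintype.card V : ℝ)) := by
  letI := Classical.decEq V
  letI : DecidableRel G.Adj := fun a b => Classical.dec _
  have hd : ∀ v, G.degree v ≤ 3 := fun v => by rw [← deg_eq]; exact hdeg v
  have hsum := sum_bound hd hconn hn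
  have hnpos : (0 : ℝ) < (Fintype.card V : ℝ) := by
    exact_mod_cast (by omega : 0 < Fintype.card V)
  unfold cc
  rw [div_le_iff₀ hnpos]
  have heq : (7/12 + 14/(12 * (Fintype.card V : ℝ))) * (Fintype.card V : ℝ)
      = 7/12 * (Fintype.card V : ℝ) + 14/12 := by
    field_simp
  rw [heq]
  exact hsum

end ClusterCoeff
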